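/- If a formal power series f ∈ ℚ⟦X⟧ is algebraic — that is, there exist polynomials p_0, …, p_d ∈ ℚ[X], not all zero, such that ∑_{i=0}^{d} p_i(X)·f^i = 0 in ℚ⟦X⟧ (each p_i being viewed as a power series) — then the coefficient sequence of f is P-recursive: there exist k ∈ ℕ, polynomials q_0, …, q_k ∈ ℚ[X], not all zero, and N ∈ ℕ such that for every n ≥ N, ∑_{i=0}^{k} q_i(n)·(coefficient of X^{n−i} in f) = 0. -/

import Mathlib

open PowerSeries Polynomial
noncomputable section
namespace Stanley
abbrev A := Polynomial ℚ
abbrev Rs := PowerSeries ℚ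

def φ : A →+* Rs := (Polynomial.coeToPowerSeries.algHom ℚ).toRingHom

def Φ (f : Rs) : Polynomial A →+* Rs := Polynomial.eval₂RingHom φ f

def mapd (Q : Polynomial A) : Polynomial A :=
  Q.sum fun n a => Polynomial.monomial n (Polynomial.derivative a)

lemma mapd_add (Q R : Polynomial A) : mapd (Q + R) = mapd Q + mapd R := by
  unfold mapd
  rw [Polynomial.sum_add_index] <;> simp [map_add]

lemma mapd_monomial (n : ℕ) (a : A) :
    mapd (Polynomial.monomial n a) = Polynomial.monomial n (Polynomial.derivative a) := by
  unfold mapd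
  rw [Polynomial.sum_monomial_index]
  simp

lemma Φ_C (f : Rs) (a : A) : Φ f (Polynomial.C a) = (a : Rs) := by
  simp [Φ, φ]

lemma Φ_X (f : Rs) : Φ f Polynomial.X = f := by simp [Φ]

lemma Φ_monomial (f : Rs) (n : ℕ) (a : A) :
    Φ f (Polynomial.monomial n a) = (a : Rs) * f ^ n := by
  simp [Φ, Polynomial.eval₂_monomial, φ]

lemma coe_natCast (n : ℕ) : (((n : A)) : Rs) = (n : Rs) := by
  rw [← Polynomial.coeToPowerSeries.ringHom_apply, map_natCast]

lemma Dphi (f : Rs) (Q : Polynomial A) :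
    PowerSeries.derivative ℚ (Φ f Q) =
      Φ f (mapd Q) + Φ f (Polynomial.derivative Q) * PowerSeries.derivative ℚ f := by
  induction Q using Polynomial.induction_on' with
  | add p q hp hq =>
      simp only [map_add, mapd_add, Polynomial.derivative_add, hp, hq]
      ring
  | monomial k a =>
      rw [Φ_monomial, mapd_monomial, Φ_monomial, Polynomial.derivative_monomial, Φ_monomial]
      rw [Derivation.leibniz, Derivation.leibniz_pow]
      rw [PowerSeries.derivative_coe]
      cases k with
      | zero => simp
      | succ k =>
        simp only [smul_eq_mul, Nat.add_sub_cancel]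
        rw [Polynomial.coe_mul, coe_natCast]
        push_cast
        ring

-- minimal annihilator
lemma exists_minimal (f : Rs) (hex : ∃ Q : Polynomial A, Q ≠ 0 ∧ Φ f Q = 0) :
    ∃ P : Polynomial A, P ≠ 0 ∧ Φ f P = 0 ∧
      ∀ Q : Polynomial A, Q ≠ 0 → Φ f Q = 0 → P.natDegree ≤ Q.natDegree := by
  classical
  let S : Set ℕ := {n | ∃ Q : Polynomial A, Q ≠ 0 ∧ Φ f Q = 0 ∧ Q.natDegree = n}
  have hS : S.Nonempty := by
    obtain ⟨Q, hQ, hQ0⟩ := hex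
    exact ⟨Q.natDegree, Q, hQ, hQ0, rfl⟩
  obtain ⟨P, hP, hP0, hPd⟩ := Nat.sInf_mem hS
  exact ⟨P, hP, hP0, fun Q hQ hQ0 => hPd ▸ Nat.sInf_le ⟨Q, hQ, hQ0, rfl⟩⟩

lemma deg_pos (f : Rs) (P₀ : Polynomial A) (hP₀ : P₀ ≠ 0) (hroot : Φ f P₀ = 0) :
    P₀.natDegree ≠ 0 := by
  intro h
  have hc : P₀ = Polynomial.C (P₀.coeff 0) := Polynomial.eq_C_of_natDegree_eq_zero h
  rw [hc, Φ_C] at hroot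
  rw [Polynomial.coe_eq_zero_iff] at hroot
  exact hP₀ (hc.trans (by rw [hroot, map_zero]))

lemma deriv_ne (f : Rs) (P₀ : Polynomial A) (hP₀ : P₀ ≠ 0) (hroot : Φ f P₀ = 0) :
    Polynomial.derivative P₀ ≠ 0 := by
  intro h
  exact deg_pos f P₀ hP₀ hroot (Polynomial.natDegree_eq_zero_of_derivative_eq_zero h)

lemma g_ne (f : Rs) (P₀ : Polynomial A) (hP₀ : P₀ ≠ 0) (hroot : Φ f P₀ = 0)
    (hmin : ∀ Q : Polynomial A, Q ≠ 0 → Φ f Q = 0 → P₀.natDegree ≤ Q.natDegree) :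
    Φ f (Polynomial.derivative P₀) ≠ 0 := by
  intro h
  have h2 := hmin _ (deriv_ne f P₀ hP₀ hroot) h
  have h3 := Polynomial.natDegree_derivative_lt (deg_pos f P₀ hP₀ hroot)
  omega

lemma base_eq (f : Rs) (P₀ : Polynomial A) (hroot : Φ f P₀ = 0) :
    Φ f (Polynomial.derivative P₀) * PowerSeries.derivative ℚ f = - Φ f (mapd P₀) := by
  have h := Dphi f P₀
  rw [hroot, map_zero] at h
  linear_combination -h


lemma derivs_rep (f : Rs) (P₀ : Polynomial A) (hroot : Φ f P₀ = 0) (n : ℕ) :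
    ∃ Q : Polynomial A,
      Φ f Q = (Φ f (Polynomial.derivative P₀)) ^ (2*n+1) *
        ((fun h => PowerSeries.derivative ℚ h)^[n] f) := by
  induction n with
  | zero =>
      refine ⟨Polynomial.derivative P₀ * Polynomial.X, ?_⟩
      rw [map_mul, Φ_X]
      simp
  | succ n ih =>
      obtain ⟨Qn, hQn⟩ := ih
      set D : Rs → Rs := fun h => PowerSeries.derivative ℚ h with hD
      set g : Rs := Φ f (Polynomial.derivative P₀) with hg
      set h : Rs := D^[n] f with hh
      have hit : D^[n+1] f = D (D^[n] f) := Function.iterate_succ_apply' D n f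
      set dd : Polynomial A := Polynomial.derivative P₀ with hdd
      -- E4
      have E4 : g * PowerSeries.derivative ℚ f = - Φ f (mapd P₀) := base_eq f P₀ hroot
      -- E3
      have E3 : PowerSeries.derivative ℚ g =
          Φ f (mapd dd) + Φ f (Polynomial.derivative dd) * PowerSeries.derivative ℚ f :=
        Dphi f dd
      -- E1 : apply D to hQn
      have E1 : Φ f (mapd Qn) + Φ f (Polynomial.derivative Qn) * PowerSeries.derivative ℚ f
          = g ^ (2*n+1) * PowerSeries.derivative ℚ h
            + ((2*n+1 : ℕ) : Rs) * g ^ (2*n) * PowerSeries.derivative ℚ g * h := by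
        have := congrArg (PowerSeries.derivative ℚ) hQn
        rw [Dphi] at this
        rw [Derivation.leibniz, Derivation.leibniz_pow] at this
        simpa [smul_eq_mul, nsmul_eq_mul, Nat.add_sub_cancel, mul_comm, mul_assoc, mul_left_comm]
          using this
      refine ⟨dd^2 * mapd Qn - (Polynomial.derivative Qn) * dd * mapd P₀
        - ((2*n+1 : ℕ) : Polynomial A) * Qn *
            (dd * mapd dd - Polynomial.derivative dd * mapd P₀), ?_⟩
      rw [hit]
      have hcast : Φ f ((2*n+1 : ℕ) : Polynomial A) = ((2*n+1 : ℕ) : Rs) := map_natCast _ _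
      simp only [map_sub, map_mul, map_pow, hcast, ← hg]
      linear_combination (g^2) * E1
        + (((2*n+1 : ℕ) : Rs) * Φ f (Polynomial.derivative dd) * Φ f (mapd P₀)
            - ((2*n+1 : ℕ) : Rs) * g * Φ f (mapd dd)) * hQn
        + (((2*n+1 : ℕ) : Rs) * g^(2*n+2) * h) * E3
        + (((2*n+1 : ℕ) : Rs) * Φ f (Polynomial.derivative dd) * g^(2*n+1) * h
            - Φ f (Polynomial.derivative Qn) * g) * E4


abbrev F := RatFunc ℚ
def σA : A →+* F := algebraMap A F

lemma σA_inj : Function.Injective σA := IsFractionRing.injective A F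

lemma mapσ_inj : Function.Injective (Polynomial.map σA) :=
  Polynomial.map_injective σA σA_inj

/-- clear denominators of a polynomial over `F` -/
lemma clear_denoms (u : Polynomial F) :
    ∃ (c : A) (U : Polynomial A), c ≠ 0 ∧ U.map σA = Polynomial.C (σA c) * u := by
  induction u using Polynomial.induction_on' with
  | monomial n a =>
      refine ⟨a.denom, Polynomial.monomial n a.num, RatFunc.denom_ne_zero a, ?_⟩
      rw [Polynomial.map_monomial]
      have hden : σA a.denom ≠ 0 := fun h => RatFunc.denom_ne_zero a (σA_inj (by rw [h, map_zero]))
      have h1 : σA a.num = a * σA a.denom := by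
        exact (div_eq_iff hden).mp (RatFunc.num_div_denom a)
      rw [h1, Polynomial.C_mul_monomial]
      ring_nf
  | add u v hu hv =>
      obtain ⟨cu, U, hcu, hU⟩ := hu
      obtain ⟨cv, V, hcv, hV⟩ := hv
      refine ⟨cu * cv, Polynomial.C cv * U + Polynomial.C cu * V, mul_ne_zero hcu hcv, ?_⟩
      rw [Polynomial.map_add, Polynomial.map_mul, Polynomial.map_mul, hU, hV]
      simp only [Polynomial.map_C, map_mul]
      ring

lemma exists_irred_ann (f : Rs) (hex : ∃ Q : Polynomial A, Q ≠ 0 ∧ Φ f Q = 0) :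
    ∃ q : Polynomial A, Irreducible q ∧ Φ f q = 0 := by
  obtain ⟨Q, hQ0, hQ⟩ := hex
  have H : ∀ Q : Polynomial A, Q ≠ 0 → Φ f Q = 0 → ∃ q, Irreducible q ∧ Φ f q = 0 := by
    intro Q
    induction Q using UniqueFactorizationMonoid.induction_on_prime with
    | h₁ => intro h; exact absurd rfl h
    | h₂ x hx =>
        intro _ hx0
        exact absurd hx0 (IsUnit.ne_zero (hx.map (Φ f)))
    | h₃ a p ha hp ih =>
        intro _ hpa
        rw [map_mul] at hpa
        rcases mul_eq_zero.mp hpa with h | h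
        · exact ⟨p, hp.irreducible, h⟩
        · exact ih ha h
  exact H Q hQ0 hQ

lemma irred_deg_pos (f : Rs) (q : Polynomial A) (hq : Irreducible q) (hroot : Φ f q = 0) :
    q.natDegree ≠ 0 := by
  intro h
  have hc : q = Polynomial.C (q.coeff 0) := Polynomial.eq_C_of_natDegree_eq_zero h
  rw [hc, Φ_C, Polynomial.coe_eq_zero_iff] at hroot
  exact hq.ne_zero (hc.trans (by rw [hroot, map_zero]))

lemma irred_primitive (q : Polynomial A) (hq : Irreducible q) (hd : q.natDegree ≠ 0) :
    q.IsPrimitive := by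
  rw [Polynomial.isPrimitive_iff_isUnit_of_C_dvd]
  intro r hr
  obtain ⟨w, hw⟩ := hr
  rcases hq.isUnit_or_isUnit hw with h | h
  · exact Polynomial.isUnit_C.mp h
  · exfalso
    have : q.natDegree = 0 := by
      rw [hw, Polynomial.natDegree_mul (fun h0 => by simp [h0] at hw; exact hq.ne_zero hw) h.ne_zero]
      rw [Polynomial.natDegree_C, Polynomial.natDegree_eq_zero_of_isUnit h]
    exact hd this

lemma exists_inverse (f : Rs) (q : Polynomial A) (hq : Irreducible q) (hroot : Φ f q = 0) :
    ∃ (V : Polynomial A) (c : A), c ≠ 0 ∧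
      Φ f V * Φ f (Polynomial.derivative q) = ((c : A) : Rs) := by
  have hd : q.natDegree ≠ 0 := irred_deg_pos f q hq hroot
  have hprim : q.IsPrimitive := irred_primitive q hq hd
  set dd : Polynomial A := Polynomial.derivative q with hdd
  have hddne : dd ≠ 0 := fun h =>
    hd (Polynomial.natDegree_eq_zero_of_derivative_eq_zero h)
  -- work in F[Y]
  set qF : Polynomial F := q.map σA with hqF
  set ddF : Polynomial F := dd.map σA with hddF
  have hqFirr : Irreducible qF :=
    (hprim.irreducible_iff_irreducible_map_fraction_map).mp hq
  have hddFne : ddF ≠ 0 := fun h => hddne (mapσ_inj (by simpa using h))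
  have hdeglt : ddF.degree < qF.degree := by
    rw [hqF, hddF, Polynomial.degree_map_eq_of_injective σA_inj,
      Polynomial.degree_map_eq_of_injective σA_inj]
    exact Polynomial.degree_derivative_lt hq.ne_zero
  have hnotdvd : ¬ qF ∣ ddF := fun h =>
    absurd (Polynomial.degree_le_of_dvd h hddFne) (not_le_of_gt hdeglt)
  obtain ⟨u, v, huv⟩ := (hqFirr.coprime_iff_not_dvd.mpr hnotdvd)
  obtain ⟨cu, U, hcu, hU⟩ := clear_denoms u
  obtain ⟨cv, V, hcv, hV⟩ := clear_denoms v
  have key : Polynomial.C cv * U * q + Polynomial.C cu * V * dd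
      = Polynomial.C (cu * cv) := by
    apply mapσ_inj
    rw [Polynomial.map_add, Polynomial.map_mul, Polynomial.map_mul, Polynomial.map_mul,
      Polynomial.map_mul, Polynomial.map_C, Polynomial.map_C, hU, hV, Polynomial.map_C, map_mul]
    have : (Polynomial.C (σA cv) : Polynomial F) * (Polynomial.C (σA cu) * u) * qF
        + Polynomial.C (σA cu) * (Polynomial.C (σA cv) * v) * ddF
        = Polynomial.C (σA cu) * Polynomial.C (σA cv) * (u * qF + v * ddF) := by ring
    rw [this, huv, mul_one, Polynomial.C_mul]
  refine ⟨Polynomial.C cu * V, cu * cv, mul_ne_zero hcu hcv, ?_⟩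
  have := congrArg (Φ f) key
  rw [map_add, map_mul, map_mul, map_mul, map_mul, hroot, mul_zero, zero_add, Φ_C] at this
  rw [map_mul, Φ_C]
  exact this.trans (Φ_C f _)

lemma reduce (f : Rs) (q : Polynomial A) (hq : Irreducible q) (hroot : Φ f q = 0)
    (W : Polynomial A) :
    ∃ (γ : A) (T : Polynomial A), γ ≠ 0 ∧ T.natDegree < q.natDegree ∧
      ((γ : A) : Rs) * Φ f W = Φ f T := by
  have hd : q.natDegree ≠ 0 := irred_deg_pos f q hq hroot
  set qF : Polynomial F := q.map σA with hqF
  have hqFne : qF ≠ 0 := fun h => hq.ne_zero (mapσ_inj (by simpa using h))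
  set WF : Polynomial F := W.map σA with hWF
  set S : Polynomial F := WF / qF with hS
  set T' : Polynomial F := WF % qF with hT'
  have hdm : qF * S + T' = WF := EuclideanDomain.div_add_mod WF qF
  have hT'deg : T'.degree < qF.degree := EuclideanDomain.mod_lt _ hqFne
  obtain ⟨cS, SA, hcS, hSA⟩ := clear_denoms S
  obtain ⟨cT, TA, hcT, hTA⟩ := clear_denoms T'
  have key : Polynomial.C (cS * cT) * W = Polynomial.C cT * (q * SA) + Polynomial.C cS * TA := by
    apply mapσ_inj
    rw [Polynomial.map_mul, Polynomial.map_add, Polynomial.map_mul, Polynomial.map_mul,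
      Polynomial.map_mul, Polynomial.map_C, Polynomial.map_C, Polynomial.map_C, hSA, hTA]
    rw [map_mul, Polynomial.C_mul, ← hWF]
    calc Polynomial.C (σA cS) * Polynomial.C (σA cT) * WF
        = Polynomial.C (σA cS) * Polynomial.C (σA cT) * (qF * S + T') := by rw [hdm]
      _ = Polynomial.C (σA cT) * (qF * (Polynomial.C (σA cS) * S))
          + Polynomial.C (σA cS) * (Polynomial.C (σA cT) * T') := by ring
  refine ⟨cS * cT, Polynomial.C cS * TA, mul_ne_zero hcS hcT, ?_, ?_⟩
  · -- degree bound
    have h1 : (Polynomial.C cS * TA).natDegree ≤ TA.natDegree := Polynomial.natDegree_C_mul_le _ _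
    rcases eq_or_ne TA 0 with h0 | h0
    · rw [h0, mul_zero]
      simp only [Polynomial.natDegree_zero]
      omega
    · have h2 : TA.natDegree = (Polynomial.C (σA cT) * T').natDegree := by
        rw [← hTA, Polynomial.natDegree_map_eq_of_injective σA_inj]
      have hσcT : σA cT ≠ 0 := fun h => hcT (σA_inj (by rw [h, map_zero]))
      have hT'ne : T' ≠ 0 := by
        intro h
        rw [h, mul_zero] at hTA
        exact h0 (mapσ_inj (by simpa using hTA))
      have h3 : (Polynomial.C (σA cT) * T').natDegree = T'.natDegree :=
        Polynomial.natDegree_C_mul hσcT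
      have h4 : T'.natDegree < qF.natDegree :=
        Polynomial.natDegree_lt_natDegree hT'ne hT'deg
      have h5 : qF.natDegree = q.natDegree :=
        Polynomial.natDegree_map_eq_of_injective σA_inj q
      omega
  · have h6 : Φ f (Polynomial.C (cS*cT) * W) = Φ f (Polynomial.C cS * TA) := by
      rw [key, map_add, map_mul, map_mul, hroot, zero_mul, mul_zero, zero_add]
    rw [← Φ_C f (cS*cT), ← map_mul]
    exact h6

/-- full representation: scalar multiple of each derivative is `Φ` of a small-degree polynomial -/
lemma final_rep (f : Rs) (q : Polynomial A) (hq : Irreducible q) (hroot : Φ f q = 0) (n : ℕ) :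
    ∃ (γ : A) (T : Polynomial A), γ ≠ 0 ∧ T.natDegree < q.natDegree ∧
      ((γ : A) : Rs) * ((fun h => PowerSeries.derivative ℚ h)^[n] f) = Φ f T := by
  obtain ⟨V, c, hc, hVc⟩ := exists_inverse f q hq hroot
  obtain ⟨Qn, hQn⟩ := derivs_rep f q hroot n
  -- Φ (V^(2n+1) * Qn) = (c:Rs)^(2n+1) * D^[n] f
  have hW : Φ f (V ^ (2*n+1) * Qn) = ((c ^ (2*n+1) : A) : Rs)
      * ((fun h => PowerSeries.derivative ℚ h)^[n] f) := by
    rw [map_mul, map_pow, hQn]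
    have : ((c ^ (2*n+1) : A) : Rs) = ((c : A) : Rs) ^ (2*n+1) := by
      rw [← Polynomial.coeToPowerSeries.ringHom_apply, map_pow]
      rfl
    rw [this, ← hVc]
    ring
  obtain ⟨γ, T, hγ, hT, hred⟩ := reduce f q hq hroot (V ^ (2*n+1) * Qn)
  refine ⟨γ * c ^ (2*n+1), T, mul_ne_zero hγ (pow_ne_zero _ hc), hT, ?_⟩
  have hcast : ((γ * c ^ (2*n+1) : A) : Rs) = ((γ:A):Rs) * ((c ^ (2*n+1) : A) : Rs) := by
    rw [← Polynomial.coeToPowerSeries.ringHom_apply, map_mul]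
    rfl
  rw [hcast, mul_assoc, ← hW, hred]
set_option maxHeartbeats 2000000 in
set_option synthInstance.maxHeartbeats 200000 in
lemma exists_ode (f : Rs) (hex : ∃ Q : Polynomial A, Q ≠ 0 ∧ Φ f Q = 0) :
    ∃ (r : ℕ) (b : ℕ → A), (∃ i, i ≤ r ∧ b i ≠ 0) ∧
      ∑ i ∈ Finset.range (r+1), ((b i : A) : Rs)
        * ((fun h => PowerSeries.derivative ℚ h)^[i] f) = 0 := by
  classical
  obtain ⟨q, hq, hroot⟩ := exists_irred_ann f hex
  set m : ℕ := q.natDegree with hm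
  have hm0 : m ≠ 0 := irred_deg_pos f q hq hroot
  choose γ T hγ hT hrep using final_rep f q hq hroot
  set w : Fin (m+1) → (Fin m → F) := fun n j => σA ((T n).coeff j) with hw
  have hnli : ¬ LinearIndependent F w := by
    intro hli
    have h1 := hli.fintype_card_le_finrank
    rw [Module.finrank_fin_fun, Fintype.card_fin] at h1
    omega
  obtain ⟨cdep, hsum, i₀, hi₀⟩ := Fintype.not_linearIndependent_iff.mp hnli
  set b : Fin (m+1) → A :=
    fun n => (cdep n).num * ∏ j ∈ Finset.univ.erase n, (cdep j).denom with hb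
  set dtot : A := ∏ j, (cdep j).denom with hdtot
  have hbspec : ∀ n, σA (b n) = cdep n * σA dtot := by
    intro n
    have hden : σA (cdep n).denom ≠ 0 :=
      fun h => RatFunc.denom_ne_zero (cdep n) (σA_inj (by rw [h, map_zero]))
    have h1 : σA (cdep n).num = cdep n * σA (cdep n).denom :=
      (div_eq_iff hden).mp (RatFunc.num_div_denom (cdep n))
    rw [hb, hdtot]
    simp only [map_mul, map_prod, h1]
    rw [← Finset.mul_prod_erase Finset.univ (fun j => σA (cdep j).denom)
      (Finset.mem_univ n)]
    ring
  have hbne : b i₀ ≠ 0 := by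
    rw [hb]
    exact mul_ne_zero (RatFunc.num_ne_zero hi₀)
      (Finset.prod_ne_zero_iff.mpr fun j _ => RatFunc.denom_ne_zero (cdep j))
  have hzero : ∑ n : Fin (m+1), Polynomial.C (b n) * T n = 0 := by
    apply Polynomial.ext
    intro j
    rw [Polynomial.finset_sum_coeff, Polynomial.coeff_zero]
    by_cases hj : j < m
    · apply σA_inj
      rw [map_sum, map_zero]
      have hterm : ∀ n : Fin (m+1), σA ((Polynomial.C (b n) * T n).coeff j)
          = σA dtot * (cdep n * w n ⟨j, hj⟩) := by
        intro n
        rw [Polynomial.coeff_C_mul, map_mul, hbspec n, hw]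
        ring
      rw [Finset.sum_congr rfl fun n _ => hterm n, ← Finset.mul_sum]
      have h2 : (∑ i : Fin (m+1), cdep i • w i) ⟨j, hj⟩ = 0 := by rw [hsum]; rfl
      simp only [Finset.sum_apply, Pi.smul_apply, smul_eq_mul] at h2
      rw [h2, mul_zero]
    · have : ∀ n : Fin (m+1), (Polynomial.C (b n) * T n).coeff j = 0 := by
        intro n
        rw [Polynomial.coeff_C_mul,
          Polynomial.coeff_eq_zero_of_natDegree_lt (lt_of_lt_of_le (hT n) (not_lt.mp hj)),
          mul_zero]
      rw [Finset.sum_congr rfl fun n _ => this n, Finset.sum_const_zero]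
  -- apply Φ
  have hkey : ∑ n : Fin (m+1), ((b n * γ n : A) : Rs)
      * ((fun h => PowerSeries.derivative ℚ h)^[(n : ℕ)] f) = 0 := by
    have h3 := congrArg (Φ f) hzero
    rw [map_sum, map_zero] at h3
    rw [← h3]
    apply Finset.sum_congr rfl
    intro n _
    rw [map_mul, Φ_C, ← hrep n]
    have hcast : ((b n * γ n : A) : Rs) = ((b n : A) : Rs) * ((γ n : A) : Rs) := by
      rw [← Polynomial.coeToPowerSeries.ringHom_apply, map_mul]; rfl
    rw [hcast]
    ring
  refine ⟨m, fun i => if h : i < m+1 then b ⟨i, h⟩ * γ i else 0,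
    ⟨i₀, by omega, ?_⟩, ?_⟩
  · simp only [dif_pos i₀.isLt, Fin.eta]
    exact mul_ne_zero hbne (hγ i₀)
  · rw [Finset.sum_range fun i => _]
    rw [← hkey]
    apply Finset.sum_congr rfl
    intro n _
    simp only [dif_pos n.isLt, Fin.eta]
lemma coeff_iterD (h : Rs) (n t : ℕ) :
    PowerSeries.coeff t ((fun g => PowerSeries.derivative ℚ g)^[n] h)
      = (∏ u ∈ Finset.range n, ((t + u + 1 : ℕ) : ℚ)) * PowerSeries.coeff (t + n) h := by
  induction n generalizing h with
  | zero => simp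
  | succ n ih =>
      rw [Function.iterate_succ_apply, ih (PowerSeries.derivative ℚ h)]
      rw [PowerSeries.coeff_derivative]
      rw [Finset.prod_range_succ]
      have : t + n + 1 = t + (n + 1) := by omega
      rw [this]
      push_cast
      ring

lemma coeff_polymul (a : A) (h : Rs) (kk D0 : ℕ) (hdeg : a.natDegree ≤ D0) (hk : D0 ≤ kk) :
    PowerSeries.coeff kk ((a : Rs) * h)
      = ∑ s ∈ Finset.range (D0+1), a.coeff s * PowerSeries.coeff (kk - s) h := by
  rw [PowerSeries.coeff_mul]
  rw [Finset.Nat.sum_antidiagonal_eq_sum_range_succ_mk]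
  have hsub : Finset.range (D0+1) ⊆ Finset.range (kk+1) := by
    intro x hx
    simp only [Finset.mem_range] at *
    omega
  rw [← Finset.sum_subset hsub]
  · apply Finset.sum_congr rfl
    intro s _
    rw [Polynomial.coeff_coe]
  · intro s hs hns
    simp only [Finset.mem_range] at hs hns
    rw [Polynomial.coeff_coe, Polynomial.coeff_eq_zero_of_natDegree_lt (by omega), zero_mul]
/-- product of monic linear factors used as coefficient polynomials -/
def Pis (r i s : ℕ) : Polynomial ℚ :=
  ∏ u ∈ Finset.range i, (Polynomial.X + Polynomial.C ((u+1 : ℚ) - ((r : ℚ) + (s : ℚ))))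

lemma Pis_monic (r i s : ℕ) : (Pis r i s).Monic :=
  Polynomial.monic_prod_of_monic _ _ (fun u _ => Polynomial.monic_X_add_C _)

lemma Pis_natDegree (r i s : ℕ) : (Pis r i s).natDegree = i := by
  rw [Pis, Polynomial.natDegree_prod_of_monic _ _ (fun u _ => Polynomial.monic_X_add_C _)]
  rw [Finset.sum_congr rfl (fun u _ => Polynomial.natDegree_X_add_C _)]
  simp

lemma Pis_coeff_self (r i s : ℕ) : (Pis r i s).coeff i = 1 := by
  have := (Pis_monic r i s).coeff_natDegree
  rwa [Pis_natDegree] at this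

lemma Pis_eval (r i s n : ℕ) (hn : r + s ≤ n) :
    (Pis r i s).eval (n : ℚ) = ∏ u ∈ Finset.range i, ((n - r - s + u + 1 : ℕ) : ℚ) := by
  rw [Pis, Polynomial.eval_prod]
  apply Finset.prod_congr rfl
  intro u _
  rw [Polynomial.eval_add, Polynomial.eval_X, Polynomial.eval_C]
  have : ((n - r - s + u + 1 : ℕ) : ℚ) = ((n : ℚ) - (r : ℚ) - (s : ℚ)) + (u : ℚ) + 1 := by
    have h1 : ((n - r - s : ℕ) : ℚ) = (n : ℚ) - (r : ℚ) - (s : ℚ) := by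
      have : n - r - s = n - (r + s) := by omega
      rw [this, Nat.cast_sub hn]
      push_cast
      ring
    push_cast [← h1]
    ring
  rw [this]
  ring

lemma recurrence_of_ode (f : Rs) (r : ℕ) (b : ℕ → A)
    (hbne : ∃ i, i ≤ r ∧ b i ≠ 0)
    (hode : ∑ i ∈ Finset.range (r+1), ((b i : A) : Rs)
      * ((fun h => PowerSeries.derivative ℚ h)^[i] f) = 0) :
    ∃ (k N : ℕ) (qq : ℕ → Polynomial ℚ), (∃ i, i ≤ k ∧ qq i ≠ 0) ∧
      ∀ n : ℕ, N ≤ n →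
        ∑ i ∈ Finset.range (k + 1), (qq i).eval (n : ℚ)
          * PowerSeries.coeff (n - i) f = 0 := by
  classical
  set D0 : ℕ := (Finset.range (r+1)).sup (fun i => (b i).natDegree) with hD0
  set k : ℕ := r + D0 with hk
  set qq : ℕ → Polynomial ℚ := fun j =>
    ∑ i ∈ Finset.range (r+1), ∑ s ∈ Finset.range (D0+1),
      if r - i + s = j then Polynomial.C ((b i).coeff s) * Pis r i s else 0 with hqq
  -- the nonzero witness
  set Sfin : Finset ℕ := (Finset.range (r+1)).filter (fun i => b i ≠ 0) with hSfin
  have hSne : Sfin.Nonempty := by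
    obtain ⟨i, hi, hbi⟩ := hbne
    exact ⟨i, by simp [hSfin, Finset.mem_filter, Finset.mem_range]; exact ⟨by omega, hbi⟩⟩
  set istar : ℕ := Sfin.max' hSne with histar
  have histar_mem : istar ∈ Sfin := Sfin.max'_mem hSne
  have histar_le : istar ≤ r := by
    have := (Finset.mem_filter.mp histar_mem).1
    simp only [Finset.mem_range] at this
    omega
  have hbistar : b istar ≠ 0 := (Finset.mem_filter.mp histar_mem).2
  have hmax : ∀ i, i ≤ r → b i ≠ 0 → i ≤ istar := by
    intro i hi hbi
    exact Sfin.le_max' i (Finset.mem_filter.mpr ⟨Finset.mem_range.mpr (by omega), hbi⟩)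
  set sstar : ℕ := (b istar).natDegree with hsstar
  have hsstarD0 : sstar ≤ D0 :=
    Finset.le_sup (f := fun i => (b i).natDegree) (Finset.mem_range.mpr (by omega))
  have hqqne : qq (r - istar + sstar) ≠ 0 := by
    intro hzero
    have hco := congrArg (fun P => Polynomial.coeff P istar) hzero
    simp only [Polynomial.coeff_zero] at hco
    rw [hqq] at hco
    simp only [Polynomial.finset_sum_coeff] at hco
    have hterm : ∀ i ∈ Finset.range (r+1), ∀ s ∈ Finset.range (D0+1),
        (if r - i + s = r - istar + sstar
          then Polynomial.C ((b i).coeff s) * Pis r i s else 0).coeff istar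
        = if i = istar then (if s = sstar then (b istar).coeff sstar else 0) else 0 := by
      intro i hi s hs
      simp only [Finset.mem_range] at hi hs
      by_cases hcond : r - i + s = r - istar + sstar
      · rw [if_pos hcond]
        rcases lt_trichotomy i istar with hlt | heq | hgt
        · rw [if_neg (by omega)]
          apply Polynomial.coeff_eq_zero_of_natDegree_lt
          calc (Polynomial.C ((b i).coeff s) * Pis r i s).natDegree
              ≤ (Pis r i s).natDegree := Polynomial.natDegree_C_mul_le _ _
            _ = i := Pis_natDegree r i s
            _ < istar := hlt
        · subst heq
          have hseq : s = sstar := by omega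
          subst hseq
          rw [if_pos rfl, if_pos rfl, Polynomial.coeff_C_mul, Pis_coeff_self, mul_one]
        · rw [if_neg (by omega)]
          have : b i = 0 := by
            by_contra hne
            exact absurd (hmax i (by omega) hne) (by omega)
          rw [this]
          simp
      · rw [if_neg hcond, Polynomial.coeff_zero]
        by_cases hieq : i = istar
        · subst hieq
          rw [if_pos rfl, if_neg (fun hseq => hcond (by rw [hseq]))]
        · rw [if_neg hieq]
    rw [Finset.sum_congr rfl (fun i hi => Finset.sum_congr rfl (fun s hs => hterm i hi s hs))]
      at hco
    have collapse : ∀ i ∈ Finset.range (r+1),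
        (∑ s ∈ Finset.range (D0+1),
          if i = istar then (if s = sstar then (b istar).coeff sstar else 0) else 0)
        = if i = istar then (b istar).coeff sstar else 0 := by
      intro i _
      by_cases hieq : i = istar
      · subst hieq
        simp only [eq_self_iff_true, if_true]
        rw [Finset.sum_ite_eq' (Finset.range (D0+1)) sstar (fun _ => (b istar).coeff sstar)]
        rw [if_pos (Finset.mem_range.mpr (by omega))]
      · simp [hieq]
    rw [Finset.sum_congr rfl collapse] at hco
    rw [Finset.sum_ite_eq' (Finset.range (r+1)) istar (fun _ => (b istar).coeff sstar)] at hco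
    rw [if_pos (Finset.mem_range.mpr (by omega))] at hco
    exact Polynomial.leadingCoeff_ne_zero.mpr hbistar hco
  refine ⟨k, k, qq, ⟨r - istar + sstar, by omega, hqqne⟩, ?_⟩
  intro n hn
  have h0 : PowerSeries.coeff (n - r) (∑ i ∈ Finset.range (r+1),
      ((b i : A) : Rs) * ((fun h => PowerSeries.derivative ℚ h)^[i] f)) = 0 := by
    rw [hode, map_zero]
  rw [map_sum] at h0
  have hterm2 : ∀ i ∈ Finset.range (r+1),
      PowerSeries.coeff (n - r)
        (((b i : A) : Rs) * ((fun h => PowerSeries.derivative ℚ h)^[i] f))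
      = ∑ s ∈ Finset.range (D0+1), (b i).coeff s *
          ((∏ u ∈ Finset.range i, ((n - r - s + u + 1 : ℕ) : ℚ))
            * PowerSeries.coeff (n - r - s + i) f) := by
    intro i hi
    rw [coeff_polymul (b i) _ (n-r) D0
      (Finset.le_sup (f := fun i => (b i).natDegree) hi) (by omega)]
    apply Finset.sum_congr rfl
    intro s hs
    rw [coeff_iterD]
  rw [Finset.sum_congr rfl hterm2] at h0
  have hqqeval : ∀ j, (qq j).eval (n : ℚ)
      = ∑ i ∈ Finset.range (r+1), ∑ s ∈ Finset.range (D0+1),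
          (if r - i + s = j then ((b i).coeff s) * (Pis r i s).eval (n:ℚ) else 0) := by
    intro j
    rw [hqq]
    rw [Polynomial.eval_finset_sum]
    apply Finset.sum_congr rfl
    intro i _
    rw [Polynomial.eval_finset_sum]
    apply Finset.sum_congr rfl
    intro s _
    rw [apply_ite (Polynomial.eval (n:ℚ)), Polynomial.eval_zero,
      Polynomial.eval_mul, Polynomial.eval_C]
  calc ∑ j ∈ Finset.range (k + 1), (qq j).eval (n : ℚ) * PowerSeries.coeff (n - j) f
      = ∑ j ∈ Finset.range (k+1), ∑ i ∈ Finset.range (r+1), ∑ s ∈ Finset.range (D0+1),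
          (if r - i + s = j
            then ((b i).coeff s) * (Pis r i s).eval (n:ℚ) * PowerSeries.coeff (n - j) f
            else 0) := by
        apply Finset.sum_congr rfl
        intro j _
        rw [hqqeval j, Finset.sum_mul]
        apply Finset.sum_congr rfl
        intro i _
        rw [Finset.sum_mul]
        apply Finset.sum_congr rfl
        intro s _
        rw [ite_mul, zero_mul]
    _ = ∑ i ∈ Finset.range (r+1), ∑ s ∈ Finset.range (D0+1), ∑ j ∈ Finset.range (k+1),
          (if r - i + s = j
            then ((b i).coeff s) * (Pis r i s).eval (n:ℚ) * PowerSeries.coeff (n - j) f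
            else 0) := by
        rw [Finset.sum_comm]
        apply Finset.sum_congr rfl
        intro i _
        rw [Finset.sum_comm]
    _ = ∑ i ∈ Finset.range (r+1), ∑ s ∈ Finset.range (D0+1),
          ((b i).coeff s) * (Pis r i s).eval (n:ℚ)
            * PowerSeries.coeff (n - (r - i + s)) f := by
        apply Finset.sum_congr rfl
        intro i hi
        apply Finset.sum_congr rfl
        intro s hs
        rw [Finset.sum_ite_eq (Finset.range (k+1)) (r - i + s)
          (fun j => ((b i).coeff s) * (Pis r i s).eval (n:ℚ) * PowerSeries.coeff (n - j) f)]
        rw [if_pos]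
        simp only [Finset.mem_range] at hs ⊢
        omega
    _ = ∑ i ∈ Finset.range (r+1), ∑ s ∈ Finset.range (D0+1), (b i).coeff s *
          ((∏ u ∈ Finset.range i, ((n - r - s + u + 1 : ℕ) : ℚ))
            * PowerSeries.coeff (n - r - s + i) f) := by
        apply Finset.sum_congr rfl
        intro i hi
        apply Finset.sum_congr rfl
        intro s hs
        simp only [Finset.mem_range] at hi hs
        rw [Pis_eval r i s n (by omega)]
        have harg : n - (r - i + s) = n - r - s + i := by omega
        rw [harg, mul_assoc]
    _ = 0 := h0
end Stanley
end

/-- Stanley's theorem: the coefficient sequence of an algebraic formal power series over `ℚ`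
is P-recursive. -/
theorem stmt2 (f : PowerSeries ℚ) (d : ℕ) (p : ℕ → Polynomial ℚ)
    (hp : ∃ i, i ≤ d ∧ p i ≠ 0)
    (hf : ∑ i ∈ Finset.range (d + 1), (p i : PowerSeries ℚ) * f ^ i = 0) :
    ∃ (k N : ℕ) (q : ℕ → Polynomial ℚ), (∃ i, i ≤ k ∧ q i ≠ 0) ∧
      ∀ n : ℕ, N ≤ n →
        ∑ i ∈ Finset.range (k + 1), (q i).eval (n : ℚ) * PowerSeries.coeff (n - i) f = 0 := by
  classical
  have hex : ∃ Q : Polynomial (Polynomial ℚ), Q ≠ 0 ∧ Stanley.Φ f Q = 0 := by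
    obtain ⟨i₀, hi₀, hpi₀⟩ := hp
    refine ⟨∑ i ∈ Finset.range (d+1), Polynomial.C (p i) * Polynomial.X ^ i, ?_, ?_⟩
    · intro h
      have hc := congrArg (fun Q => Polynomial.coeff Q i₀) h
      simp only [Polynomial.finset_sum_coeff, Polynomial.coeff_zero] at hc
      have hterm : ∀ i ∈ Finset.range (d+1),
          (Polynomial.C (p i) * Polynomial.X ^ i).coeff i₀
          = if i = i₀ then p i else 0 := by
        intro i _
        rw [Polynomial.coeff_C_mul, Polynomial.coeff_X_pow]
        by_cases hii : i = i₀
        · subst hii; simp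
        · rw [if_neg (fun hh => hii hh.symm), if_neg hii, mul_zero]
      rw [Finset.sum_congr rfl hterm,
        Finset.sum_ite_eq' (Finset.range (d+1)) i₀ (fun i => p i),
        if_pos (Finset.mem_range.mpr (by omega))] at hc
      exact hpi₀ hc
    · rw [map_sum]
      rw [Finset.sum_congr rfl (fun i _ => by
        rw [map_mul, Stanley.Φ_C, map_pow, Stanley.Φ_X] : ∀ i ∈ Finset.range (d+1),
          Stanley.Φ f (Polynomial.C (p i) * Polynomial.X ^ i) = (p i : PowerSeries ℚ) * f ^ i)]
      exact hf
  obtain ⟨r, b, hbne, hode⟩ := Stanley.exists_ode f hex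
  exact Stanley.recurrence_of_ode f r b hbne hode
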